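/- Fix t ∈ ℂ∖{0,1}. For (q₂,p₂) ∈ ℂ², the two equations q₂(q₂−1)(q₂−t)·p₂ = 0 and (t−1 + (2q₂²−(t+3)q₂+2t)·p₂)·p₂ = 0 hold simultaneously if and only if p₂ = 0, or (q₂,p₂) = (0, (1−t)/(2t)), or (q₂,p₂) = (1, −1), or (q₂,p₂) = (t, −1/t). -/

import Mathlib

/-- The case `q₁ = 1` of the determination of the accessible singularities of the
fourth-order FST Painlevé system in the chart `W₀₁`. -/
theorem accessible_singularities_W01_case_q1_eq_one (t : ℂ) (ht0 : t ≠ 0) (ht1 : t ≠ 1)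
    (q₂ p₂ : ℂ) :
    (q₂ * (q₂ - 1) * (q₂ - t) * p₂ = 0 ∧
     (t - 1 + (2 * q₂ ^ 2 - (t + 3) * q₂ + 2 * t) * p₂) * p₂ = 0) ↔
    (p₂ = 0 ∨
     (q₂ = 0 ∧ p₂ = (1 - t) / (2 * t)) ∨
     (q₂ = 1 ∧ p₂ = -1) ∨
     (q₂ = t ∧ p₂ = -1 / t)) := by
  have ht1' : t - 1 ≠ 0 := sub_ne_zero.mpr ht1
  constructor
  · rintro ⟨h1, h2⟩
    by_cases hp : p₂ = 0
    · exact Or.inl hp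
    right
    have h1' : q₂ * (q₂ - 1) * (q₂ - t) = 0 :=
      (mul_eq_zero.mp h1).resolve_right hp
    have h2' : t - 1 + (2 * q₂ ^ 2 - (t + 3) * q₂ + 2 * t) * p₂ = 0 :=
      (mul_eq_zero.mp h2).resolve_right hp
    rcases mul_eq_zero.mp h1' with h | h
    · rcases mul_eq_zero.mp h with h | h
      · left
        refine ⟨h, ?_⟩
        rw [h] at h2'
        field_simp
        linear_combination h2'
      · right; left
        have hq : q₂ = 1 := sub_eq_zero.mp h
        refine ⟨hq, ?_⟩
        rw [hq] at h2'
        have h3 : (t - 1) * (1 + p₂) = 0 := by linear_combination h2'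
        rcases mul_eq_zero.mp h3 with h | h
        · exact absurd h ht1'
        · linear_combination h
    · right; right
      have hq : q₂ = t := sub_eq_zero.mp h
      refine ⟨hq, ?_⟩
      rw [hq] at h2'
      have h3 : (t - 1) * (1 + t * p₂) = 0 := by linear_combination h2'
      rcases mul_eq_zero.mp h3 with h | h
      · exact absurd h ht1'
      · field_simp
        linear_combination h
  · rintro (hp | ⟨hq, hp⟩ | ⟨hq, hp⟩ | ⟨hq, hp⟩)
    · subst hp; constructor <;> ring
    · subst hq; subst hp
      constructor
      · ring
      · field_simp
        ring
    · subst hq; subst hp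
      constructor <;> ring
    · subst hp
      rw [hq]
      constructor
      · ring
      · field_simp
        ring
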